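/- Let $Y$ be a Banach lattice in which every upward directed, norm bounded subset of the positive cone has an upper bound. If $Y$ is embedded as a closed ideal in a Banach lattice $X$, then $Y$ is a projection band in $X$; in particular, for each $x \in X_+$ the set $\{y \in Y : 0 \le y \le x\}$ has a maximum element in $Y$. -/

import Mathlib

lemma aux_inf_add_le {X : Type*} [Lattice X] [AddCommGroup X]
    [CovariantClass X X (· + ·) (· ≤ ·)]
    {a b c : X} (ha : 0 ≤ a) (hb : 0 ≤ b) (hc : 0 ≤ c) :
    a ⊓ (b + c) ≤ a ⊓ b + a ⊓ c := by
  rw [← sub_le_iff_le_add']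
  have h : a ⊓ (b + c) - a ⊓ b = (a ⊓ (b + c) - a) ⊔ (a ⊓ (b + c) - b) := by
    rw [sub_eq_add_neg, neg_inf, add_sup, ← sub_eq_add_neg, ← sub_eq_add_neg]
  rw [h, sup_le_iff]
  constructor
  · exact le_trans (by simp) (le_inf ha hc)
  · have h2 : a ⊓ (b + c) - b = (a - b) ⊓ c := by
      rw [sub_eq_add_neg, inf_add]
      congr 1 <;> abel
    rw [h2]
    exact inf_le_inf_right c (sub_le_self a hb)


/-- if every upward directed norm bounded subset of the positive cone
of `Y` has an upper bound in `Y`, and `Y` is a closed ideal of a Banach lattice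
`X`, then `Y` is a projection band; in particular each set
`{y ∈ Y : 0 ≤ y ≤ x}` (`x ∈ X₊`) has a maximum element in `Y`. -/
theorem stmt_19 {X : Type*} [NormedAddCommGroup X] [Lattice X] [HasSolidNorm X]
    [IsOrderedAddMonoid X] [NormedSpace ℝ X]
    [CompleteSpace X]
    (Y : Submodule ℝ X) (hYcl : IsClosed (Y : Set X))
    (hYsolid : ∀ x : X, ∀ y ∈ Y, |x| ≤ |y| → x ∈ Y)
    (hYdir : ∀ S : Set X, S ⊆ {y : X | y ∈ Y ∧ 0 ≤ y} → DirectedOn (· ≤ ·) S →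
      Bornology.IsBounded S → ∃ u ∈ Y, ∀ s ∈ S, s ≤ u) :
    (∀ x : X, 0 ≤ x →
      ∃ m, m ∈ Y ∧ 0 ≤ m ∧ m ≤ x ∧ ∀ y ∈ Y, 0 ≤ y → y ≤ x → y ≤ m) ∧
    (∀ x : X, ∃ u ∈ Y, ∃ v : X, (∀ w ∈ Y, |w| ⊓ |v| = 0) ∧ x = u + v) := by
  have key : ∀ x : X, 0 ≤ x →
      ∃ m, m ∈ Y ∧ 0 ≤ m ∧ m ≤ x ∧ ∀ y ∈ Y, 0 ≤ y → y ≤ x → y ≤ m := by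
    intro x hx
    set S : Set X := {y : X | y ∈ Y ∧ 0 ≤ y ∧ y ≤ x} with hS
    have hsub : S ⊆ {y : X | y ∈ Y ∧ 0 ≤ y} := fun y hy => ⟨hy.1, hy.2.1⟩
    have hdir : DirectedOn (· ≤ ·) S := by
      rintro y₁ ⟨h₁Y, h₁0, h₁x⟩ y₂ ⟨h₂Y, h₂0, h₂x⟩
      refine ⟨y₁ ⊔ y₂, ⟨?_, le_trans h₁0 le_sup_left, sup_le h₁x h₂x⟩,
        le_sup_left, le_sup_right⟩
      apply hYsolid _ (y₁ + y₂) (Y.add_mem h₁Y h₂Y)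
      rw [abs_of_nonneg (le_trans h₁0 le_sup_left),
        abs_of_nonneg (add_nonneg h₁0 h₂0)]
      exact sup_le (le_add_of_nonneg_right h₂0) (le_add_of_nonneg_left h₁0)
    have hbdd : Bornology.IsBounded S := by
      rw [isBounded_iff_forall_norm_le]
      refine ⟨‖x‖, fun y hy => norm_le_norm_of_abs_le_abs ?_⟩
      rw [abs_of_nonneg hy.2.1, abs_of_nonneg hx]
      exact hy.2.2
    obtain ⟨u, huY, hub⟩ := hYdir S hsub hdir hbdd
    have hu0 : 0 ≤ u := hub 0 ⟨Y.zero_mem, le_refl 0, hx⟩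
    have hm0 : (0:X) ≤ u ⊓ x := le_inf hu0 hx
    refine ⟨u ⊓ x, ?_, hm0, inf_le_right, fun y hyY hy0 hyx =>
      le_inf (hub y ⟨hyY, hy0, hyx⟩) hyx⟩
    apply hYsolid _ u huY
    rw [abs_of_nonneg hm0, abs_of_nonneg hu0]
    exact inf_le_left
  refine ⟨key, fun x => ?_⟩
  -- disjointness of the remainder for nonneg elements
  have hdisj : ∀ x : X, 0 ≤ x → ∀ m, m ∈ Y → 0 ≤ m → m ≤ x →
      (∀ y ∈ Y, 0 ≤ y → y ≤ x → y ≤ m) → ∀ w ∈ Y, |w| ⊓ (x - m) = 0 := by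
    intro x hx m hmY hm0 hmx hmax w hwY
    set z := |w| ⊓ (x - m) with hz
    have hz0 : 0 ≤ z := le_inf (abs_nonneg w) (sub_nonneg.2 hmx)
    have hzY : z ∈ Y := hYsolid z w hwY (by
      rw [abs_of_nonneg hz0]; exact inf_le_left)
    have hle : m + z ≤ x := by
      have h := (inf_le_right : z ≤ x - m)
      rw [add_comm]
      exact le_sub_iff_add_le.mp h
    have hmz := hmax (m + z) (Y.add_mem hmY hzY) (add_nonneg hm0 hz0) hle
    exact le_antisymm ((add_le_iff_nonpos_right _).mp hmz) hz0
  obtain ⟨m₁, hm₁Y, hm₁0, hm₁le, hm₁max⟩ := key x⁺ (posPart_nonneg x)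
  obtain ⟨m₂, hm₂Y, hm₂0, hm₂le, hm₂max⟩ := key x⁻ (negPart_nonneg x)
  refine ⟨m₁ - m₂, Y.sub_mem hm₁Y hm₂Y, (x⁺ - m₁) - (x⁻ - m₂), fun w hwY => ?_, ?_⟩
  · have ha0 : 0 ≤ x⁺ - m₁ := sub_nonneg.2 hm₁le
    have hb0 : 0 ≤ x⁻ - m₂ := sub_nonneg.2 hm₂le
    have hA : |w| ⊓ (x⁺ - m₁) = 0 := hdisj x⁺ (posPart_nonneg x) m₁ hm₁Y hm₁0 hm₁le hm₁max w hwY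
    have hB : |w| ⊓ (x⁻ - m₂) = 0 := hdisj x⁻ (negPart_nonneg x) m₂ hm₂Y hm₂0 hm₂le hm₂max w hwY
    have habs : |x⁺ - m₁ - (x⁻ - m₂)| ≤ (x⁺ - m₁) + (x⁻ - m₂) := by
      calc |x⁺ - m₁ - (x⁻ - m₂)| = |(x⁺ - m₁) + -(x⁻ - m₂)| := by rw [sub_eq_add_neg]
        _ ≤ |x⁺ - m₁| + |-(x⁻ - m₂)| := abs_add_le _ _
        _ = (x⁺ - m₁) + (x⁻ - m₂) := by
            rw [abs_neg, abs_of_nonneg ha0, abs_of_nonneg hb0]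
    have h1 : |w| ⊓ |x⁺ - m₁ - (x⁻ - m₂)| ≤ |w| ⊓ ((x⁺ - m₁) + (x⁻ - m₂)) :=
      inf_le_inf_left _ habs
    have h2 : |w| ⊓ ((x⁺ - m₁) + (x⁻ - m₂)) ≤ |w| ⊓ (x⁺ - m₁) + |w| ⊓ (x⁻ - m₂) :=
      aux_inf_add_le (abs_nonneg w) ha0 hb0
    have h3 : |w| ⊓ |x⁺ - m₁ - (x⁻ - m₂)| ≤ 0 := by
      rw [hA, hB, add_zero] at h2; exact h1.trans h2
    exact le_antisymm h3 (le_inf (abs_nonneg w) (abs_nonneg _))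
  · nth_rewrite 1 [← posPart_sub_negPart x]
    abel
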